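/- Let p > 1, a ≥ 2, λ₁ ≥ 0, λ₂ ≥ 1 be integers with λ₁ ≠ λ₂. If K(a^{(p)}; λ₁, λ₂) has a Hamiltonian decomposition, then λ₁ ≤ λ₂a(p−1). -/

import Mathlib

/-- Degree of `v` in the edge set `S` (loops count twice). -/
noncomputable def degIn {V E : Type} (ends : E → V × V) (S : Finset E) (v : V) : ℕ :=
  Nat.card {e : E // e ∈ S ∧ (ends e).1 = v} + Nat.card {e : E // e ∈ S ∧ (ends e).2 = v}

/-- The edge set `S` is connected: every two vertices are joined by a walk of edges of `S`. -/
def connIn {V E : Type} (ends : E → V × V) (S : Finset E) : Prop :=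
  ∀ u v : V,
    Relation.ReflTransGen (fun a b => ∃ e ∈ S, ends e = (a, b) ∨ ends e = (b, a)) u v

/-- `S` induces a spanning (Hamiltonian) cycle: every vertex has degree 2 in `S`
and `S` is connected. -/
def IsHamCycle {V E : Type} (ends : E → V × V) (S : Finset E) : Prop :=
  (∀ v : V, degIn ends S v = 2) ∧ connIn ends S

/-- `D` is a Hamiltonian decomposition: a partition of the edge set into
spanning cycles. -/
def IsHamDecomp {V E : Type} (ends : E → V × V) (D : Finset (Finset E)) : Prop :=
  (∀ S ∈ D, IsHamCycle ends S) ∧ ∀ e : E, ∃! S : Finset E, S ∈ D ∧ e ∈ S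

/-- Number of edges joining `u` and `v`. -/
noncomputable def multOf {V E : Type} (ends : E → V × V) (u v : V) : ℕ :=
  Nat.card {e : E // ends e = (u, v) ∨ ends e = (v, u)}

open Finset

section Helpers
variable {V E : Type} [Fintype E] (ends : E → V × V)

lemma natCard_eq_filter (P : E → Prop) [DecidablePred P] :
    Nat.card {e : E // P e} = (univ.filter P).card := by
  rw [Nat.card_eq_fintype_card, Fintype.card_subtype]

lemma degIn_eq (S : Finset E) (v : V) [DecidableEq V] [DecidableEq E] :
    degIn ends S v = (S.filter fun e => (ends e).1 = v).card
      + (S.filter fun e => (ends e).2 = v).card := by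
  classical
  unfold degIn
  rw [natCard_eq_filter, natCard_eq_filter]
  congr 1 <;> (congr 1; ext e; simp [and_comm])

lemma multOf_eq (u v : V) [DecidableEq V] :
    multOf ends u v = (univ.filter fun e => ends e = (u, v) ∨ ends e = (v, u)).card := by
  classical
  unfold multOf
  rw [natCard_eq_filter]

lemma double_count {α β : Type} (A : Finset α) (B : Finset β) (R : α → β → Prop)
    [∀ a b, Decidable (R a b)] :
    ∑ b ∈ B, (A.filter fun a => R a b).card = ∑ a ∈ A, (B.filter fun b => R a b).card := by
  simp_rw [card_filter]
  rw [Finset.sum_comm]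

lemma sum_degIn [Fintype V] [DecidableEq V] [DecidableEq E] (S : Finset E) :
    ∑ v, degIn ends S v = 2 * S.card := by
  simp_rw [degIn_eq, Finset.sum_add_distrib, two_mul]
  congr 1 <;> exact (Finset.card_eq_sum_card_fiberwise (fun e _ => mem_univ _)).symm

/-- double counting of symmetric pair sets -/
lemma sum_multOf [DecidableEq V] (B : Finset (V × V)) (hB : ∀ q ∈ B, q.1 ≠ q.2)
    (hsymm : ∀ q ∈ B, q.swap ∈ B) :
    ∑ q ∈ B, multOf ends q.1 q.2 = 2 * (univ.filter fun e => ends e ∈ B).card := by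
  classical
  have key : ∀ q ∈ B, multOf ends q.1 q.2
      = (univ.filter fun e => ends e = q ∨ ends e = q.swap).card := by
    intro q hq
    rw [multOf_eq]
    simp only [Prod.mk.eta, Prod.swap]
  rw [Finset.sum_congr rfl key, double_count]
  have key2 : ∀ e : E, ((B.filter fun q => ends e = q ∨ ends e = q.swap).card)
      = if ends e ∈ B then 2 else 0 := by
    intro e
    by_cases hmem : ends e ∈ B
    · have hset : B.filter (fun q => ends e = q ∨ ends e = q.swap)
          = {ends e, (ends e).swap} := by
        ext q
        simp only [mem_filter, mem_insert, mem_singleton]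
        constructor
        · rintro ⟨hqB, h | h⟩
          · exact Or.inl h.symm
          · right; rw [h, Prod.swap_swap]
        · rintro (rfl | rfl)
          · exact ⟨hmem, Or.inl rfl⟩
          · exact ⟨hsymm _ hmem, Or.inr (Prod.swap_swap _).symm⟩
      rw [hset, if_pos hmem]
      rw [card_insert_of_notMem, card_singleton]
      simp only [mem_singleton]
      intro h
      exact hB _ hmem (congrArg Prod.fst h)
    · have hset : B.filter (fun q => ends e = q ∨ ends e = q.swap) = ∅ := by
        ext q
        simp only [mem_filter, notMem_empty, iff_false, not_and]
        intro hqB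
        rintro (h | h)
        · exact hmem (h ▸ hqB)
        · exact hmem (h ▸ hsymm _ hqB)
      rw [hset, if_neg hmem, card_empty]
  rw [Finset.sum_congr rfl (fun e _ => key2 e)]
  rw [Finset.sum_ite, Finset.sum_const, Finset.sum_const]
  simp [mul_comm]

end Helpers

lemma pure_bound {p a : ℕ} (ha : 2 ≤ a) {E : Type} [Fintype E]
    (ends : E → (Fin p × Fin a) × (Fin p × Fin a))
    (S : Finset E) (hdeg : ∀ v, degIn ends S v = 2)
    (hconn : connIn ends S) (i j : Fin p) (hij : j ≠ i) :
    (S.filter fun e => (ends e).1.1 = i ∧ (ends e).2.1 = i).card ≤ a - 1 := by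
  classical
  by_contra hlt
  push_neg at hlt
  set T := S.filter (fun e => (ends e).1.1 = i ∧ (ends e).2.1 = i) with hT
  set Vi : Finset (Fin p × Fin a) := univ.filter (fun v => v.1 = i) with hVi
  have hVicard : Vi.card = a := by
    have hprod : Vi = {i} ×ˢ univ := by
      ext v
      simp only [hVi, mem_filter, mem_univ, true_and, mem_product, mem_singleton, and_true]
    rw [hprod, card_product, card_singleton, card_univ, Fintype.card_fin, one_mul]
  have hsum : ∑ v ∈ Vi, degIn ends T v = 2 * T.card := by
    simp_rw [degIn_eq, Finset.sum_add_distrib, two_mul]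
    congr 1
    · exact (Finset.card_eq_sum_card_fiberwise (fun e he => by
        simp only [hT, mem_coe, mem_filter] at he
        simp [hVi, he.2.1])).symm
    · exact (Finset.card_eq_sum_card_fiberwise (fun e he => by
        simp only [hT, mem_coe, mem_filter] at he
        simp [hVi, he.2.2])).symm
  have hTsub : ∀ v, degIn ends T v ≤ degIn ends S v := by
    intro v
    rw [degIn_eq, degIn_eq]
    exact Nat.add_le_add
      (card_le_card (filter_subset_filter _ (filter_subset _ _)))
      (card_le_card (filter_subset_filter _ (filter_subset _ _)))
  have hle : ∀ v ∈ Vi, degIn ends T v ≤ 2 := fun v _ => (hdeg v) ▸ hTsub v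
  have hub : 2 * T.card ≤ 2 * a := by
    rw [← hsum]
    calc ∑ v ∈ Vi, degIn ends T v ≤ ∑ _v ∈ Vi, 2 := Finset.sum_le_sum hle
    _ = 2 * a := by rw [Finset.sum_const, smul_eq_mul, hVicard, mul_comm]
  have hTcard : T.card = a := by omega
  have hdeg2 : ∀ v ∈ Vi, degIn ends T v = 2 := by
    rw [← Finset.sum_eq_sum_iff_of_le hle]
    rw [hsum, Finset.sum_const, smul_eq_mul, hVicard, hTcard, mul_comm]
  have hpure : ∀ e ∈ S, ((ends e).1.1 = i → (ends e).2.1 = i)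
      ∧ ((ends e).2.1 = i → (ends e).1.1 = i) := by
    intro e he
    constructor
    · intro h1
      by_contra h2
      have hv : (ends e).1 ∈ Vi := by simp [hVi, h1]
      have hTe : e ∉ T := by
        simp only [hT, mem_filter]; tauto
      have hsubset : T.filter (fun e' => (ends e').1 = (ends e).1)
          ⊆ (S.filter fun e' => (ends e').1 = (ends e).1).erase e := by
        intro x hx
        obtain ⟨hxT, hPx⟩ := mem_filter.mp hx
        obtain ⟨hxS, hpurex⟩ := mem_filter.mp hxT
        rw [mem_erase]
        exact ⟨fun hxe => hTe (hxe ▸ hxT), mem_filter.mpr ⟨hxS, hPx⟩⟩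
      have hein : e ∈ S.filter (fun e' => (ends e').1 = (ends e).1) :=
        mem_filter.mpr ⟨he, rfl⟩
      have c1 : (T.filter fun e' => (ends e').1 = (ends e).1).card
          ≤ (S.filter fun e' => (ends e').1 = (ends e).1).card - 1 := by
        calc _ ≤ ((S.filter fun e' => (ends e').1 = (ends e).1).erase e).card :=
              card_le_card hsubset
        _ = _ := card_erase_of_mem hein
      have c2 : (T.filter fun e' => (ends e').2 = (ends e).1).card
          ≤ (S.filter fun e' => (ends e').2 = (ends e).1).card :=
        card_le_card (filter_subset_filter _ (filter_subset _ _))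
      have h1pos : 0 < (S.filter fun e' => (ends e').1 = (ends e).1).card :=
        card_pos.mpr ⟨e, hein⟩
      have hdS := hdeg (ends e).1
      have hdT := hdeg2 (ends e).1 hv
      rw [degIn_eq] at hdS hdT
      omega
    · intro h1
      by_contra h2
      have hv : (ends e).2 ∈ Vi := by simp [hVi, h1]
      have hTe : e ∉ T := by
        simp only [hT, mem_filter]; tauto
      have hsubset : T.filter (fun e' => (ends e').2 = (ends e).2)
          ⊆ (S.filter fun e' => (ends e').2 = (ends e).2).erase e := by
        intro x hx
        obtain ⟨hxT, hPx⟩ := mem_filter.mp hx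
        obtain ⟨hxS, hpurex⟩ := mem_filter.mp hxT
        rw [mem_erase]
        exact ⟨fun hxe => hTe (hxe ▸ hxT), mem_filter.mpr ⟨hxS, hPx⟩⟩
      have hein : e ∈ S.filter (fun e' => (ends e').2 = (ends e).2) :=
        mem_filter.mpr ⟨he, rfl⟩
      have c1 : (T.filter fun e' => (ends e').2 = (ends e).2).card
          ≤ (S.filter fun e' => (ends e').2 = (ends e).2).card - 1 := by
        calc _ ≤ ((S.filter fun e' => (ends e').2 = (ends e).2).erase e).card :=
              card_le_card hsubset
        _ = _ := card_erase_of_mem hein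
      have c2 : (T.filter fun e' => (ends e').1 = (ends e).2).card
          ≤ (S.filter fun e' => (ends e').1 = (ends e).2).card :=
        card_le_card (filter_subset_filter _ (filter_subset _ _))
      have h1pos : 0 < (S.filter fun e' => (ends e').2 = (ends e).2).card :=
        card_pos.mpr ⟨e, hein⟩
      have hdS := hdeg (ends e).2
      have hdT := hdeg2 (ends e).2 hv
      rw [degIn_eq] at hdS hdT
      omega
  have ha0 : 0 < a := by omega
  set u : Fin p × Fin a := (i, ⟨0, ha0⟩) with hu
  have key : ∀ w, Relation.ReflTransGen
      (fun x y => ∃ e ∈ S, ends e = (x, y) ∨ ends e = (y, x)) u w → w.1 = i := by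
    intro w hw
    induction hw with
    | refl => rfl
    | tail _hrest hstep ih =>
      obtain ⟨e, he, hcase⟩ := hstep
      cases hcase with
      | inl h =>
        have h1 : (ends e).1.1 = i := by rw [h]; exact ih
        have h2 := (hpure e he).1 h1
        rw [h] at h2; exact h2
      | inr h =>
        have h1 : (ends e).2.1 = i := by rw [h]; exact ih
        have h2 := (hpure e he).2 h1
        rw [h] at h2; exact h2
  exact hij (key (j, ⟨0, ha0⟩) (hconn u (j, ⟨0, ha0⟩)))


lemma Vi_card {p a : ℕ} (i : Fin p) :
    ((univ : Finset (Fin p × Fin a)).filter fun v => v.1 = i).card = a := by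
  have hprod : ((univ : Finset (Fin p × Fin a)).filter fun v => v.1 = i)
      = {i} ×ˢ univ := by
    ext v
    simp only [mem_filter, mem_univ, true_and, mem_product, mem_singleton, and_true]
  rw [hprod, card_product, card_singleton, card_univ, Fintype.card_fin, one_mul]


lemma final_arith (A P d c l1 l2 s2 : ℕ)
    (hall : (P + 2) * ((A + 2) * (A + 2) - (A + 2)) * l1 + s2 * l2
      = 2 * (d * ((P + 2) * (A + 2))))
    (hBallcard : (P + 2) * ((A + 2) * (A + 2) - (A + 2)) + s2
      = (P + 2) * (A + 2) * ((P + 2) * (A + 2)) - (P + 2) * (A + 2))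
    (hpure : ((A + 2) * (A + 2) - (A + 2)) * l1 = 2 * c)
    (hPisum : c ≤ d * (A + 2 - 1)) :
    l1 ≤ l2 * (A + 2) * (P + 2 - 1) := by
  have hle1 : (A + 2) ≤ (A + 2) * (A + 2) := Nat.le_mul_of_pos_left _ (by omega)
  have hle2 : (P + 2) * (A + 2) ≤ (P + 2) * (A + 2) * ((P + 2) * (A + 2)) :=
    Nat.le_mul_of_pos_right _ (by positivity)
  zify [hle1, hle2, show (1:ℕ) ≤ A + 2 by omega, show (1:ℕ) ≤ P + 2 by omega]
    at hall hBallcard hpure hPisum ⊢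
  have hs2 : (s2 : ℤ) = ((P + 2) * (A + 2)) * ((A + 2) * (P + 1)) := by
    linear_combination hBallcard
  rw [hs2] at hall
  have h2d : (2 * (d:ℤ)) = (A + 1) * l1 + l2 * ((A + 2) * (P + 1)) := by
    have hx : ((P + 2 : ℤ)) * ((A + 2 : ℤ)) ≠ 0 := by positivity
    apply mul_left_cancel₀ hx
    linear_combination -hall
  have hcancel : ((A + 2 : ℤ)) * l1 ≤ (A + 1) * l1 + l2 * ((A + 2) * (P + 1)) := by
    have hstep : ((A + 2 : ℤ)) * l1 * (A + 1)
        ≤ ((A + 1) * l1 + l2 * ((A + 2) * (P + 1))) * (A + 1) := by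
      nlinarith [hpure, hPisum, h2d]
    exact le_of_mul_le_mul_right hstep (by positivity)
  nlinarith [hcancel]


/-- If `K(a^{(p)}; λ₁, λ₂)` (with `p > 1`, `a ≥ 2`, `λ₂ ≥ 1`, `λ₁ ≠ λ₂`) has a
Hamiltonian decomposition, then `λ₁ ≤ λ₂a(p-1)`. -/
theorem hamDecomp_lambda_ineq (p a l1 l2 : ℕ) (hp : 1 < p) (ha : 2 ≤ a)
    (hl2 : 1 ≤ l2) (hne : l1 ≠ l2)
    {E : Type} [Fintype E]
    (ends : E → (Fin p × Fin a) × (Fin p × Fin a))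
    (hloopless : ∀ e, (ends e).1 ≠ (ends e).2)
    (hmult : ∀ u v : Fin p × Fin a, u ≠ v →
      multOf ends u v = if u.1 = v.1 then l1 else l2)
    (D : Finset (Finset E)) (hD : IsHamDecomp ends D) :
    l1 ≤ l2 * a * (p - 1) := by
  classical
  obtain ⟨hcyc, huniq⟩ := hD
  have hp0 : 0 < p := by omega
  have ha0 : 0 < a := by omega
  set i : Fin p := ⟨0, hp0⟩ with hi
  set j : Fin p := ⟨1, hp⟩ with hj
  have hij : j ≠ i := by simp [hi, hj, Fin.ext_iff]
  set Pi : Finset E := univ.filter (fun e => (ends e).1.1 = i ∧ (ends e).2.1 = i) with hPi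
  -- (A) each cycle has p*a edges
  have hScard : ∀ S ∈ D, S.card = p * a := by
    intro S hS
    have h1 := sum_degIn ends S
    rw [Finset.sum_congr rfl (fun v _ => (hcyc S hS).1 v), Finset.sum_const,
      smul_eq_mul, card_univ, Fintype.card_prod, Fintype.card_fin, Fintype.card_fin] at h1
    omega
  -- (B) partition counting
  have huniqcard : ∀ e : E, (D.filter fun S => e ∈ S).card = 1 := by
    intro e
    obtain ⟨S₀, hS₀, hS₀u⟩ := huniq e
    rw [card_eq_one]
    refine ⟨S₀, ?_⟩
    ext S
    simp only [mem_filter, mem_singleton]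
    constructor
    · rintro ⟨h1, h2⟩; exact hS₀u S ⟨h1, h2⟩
    · rintro rfl; exact hS₀
  have hpartition : ∀ A : Finset E, ∑ S ∈ D, (A.filter fun e => e ∈ S).card = A.card := by
    intro A
    rw [double_count, Finset.sum_congr rfl (fun e _ => huniqcard e), Finset.sum_const,
      smul_eq_mul, mul_one]
  have hNE : D.card * (p * a) = Fintype.card E := by
    calc D.card * (p * a) = ∑ _S ∈ D, (p * a) := by rw [Finset.sum_const, smul_eq_mul]
    _ = ∑ S ∈ D, (univ.filter fun e => e ∈ S).card := Finset.sum_congr rfl (fun S hS => by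
        rw [show (univ.filter fun e => e ∈ S) = S from by ext e; simp]
        exact (hScard S hS).symm)
    _ = (univ : Finset E).card := hpartition univ
    _ = Fintype.card E := card_univ
  have hPisum : Pi.card ≤ D.card * (a - 1) := by
    rw [← hpartition Pi]
    have hfilter : ∀ S ∈ D, (Pi.filter fun e => e ∈ S)
        = S.filter (fun e => (ends e).1.1 = i ∧ (ends e).2.1 = i) := by
      intro S _
      ext e
      simp only [hPi, mem_filter, mem_univ, true_and]
      tauto
    calc ∑ S ∈ D, (Pi.filter fun e => e ∈ S).card
        ≤ ∑ _S ∈ D, (a - 1) := by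
          refine Finset.sum_le_sum (fun S hS => ?_)
          rw [hfilter S hS]
          exact pure_bound ha ends S (hcyc S hS).1 (hcyc S hS).2 i j hij
      _ = D.card * (a - 1) := by rw [Finset.sum_const, smul_eq_mul]
  -- (C) multiplicity counting over all pairs
  set Ball : Finset ((Fin p × Fin a) × (Fin p × Fin a)) :=
    (univ : Finset (Fin p × Fin a)).offDiag with hBall
  have hBallne : ∀ q ∈ Ball, q.1 ≠ q.2 := fun q hq => (Finset.mem_offDiag.mp hq).2.2
  have hBallsymm : ∀ q ∈ Ball, q.swap ∈ Ball := by
    intro q hq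
    obtain ⟨h1, h2, h3⟩ := Finset.mem_offDiag.mp hq
    exact Finset.mem_offDiag.mpr ⟨h2, h1, fun h => h3 h.symm⟩
  have hall := sum_multOf ends Ball hBallne hBallsymm
  have hallfilter : (univ.filter fun e => ends e ∈ Ball) = (univ : Finset E) := by
    ext e
    simp only [mem_filter, mem_univ, true_and, iff_true, hBall, Finset.mem_offDiag]
    exact hloopless e
  rw [hallfilter, card_univ] at hall
  set S1 : Finset ((Fin p × Fin a) × (Fin p × Fin a)) :=
    Ball.filter (fun q => q.1.1 = q.2.1) with hS1
  have hallsum : ∑ q ∈ Ball, multOf ends q.1 q.2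
      = S1.card * l1 + (Ball.filter fun q => ¬ q.1.1 = q.2.1).card * l2 := by
    rw [Finset.sum_congr rfl (fun q hq => hmult q.1 q.2 (hBallne q hq))]
    rw [Finset.sum_ite, Finset.sum_const, Finset.sum_const, smul_eq_mul, smul_eq_mul]
  have hBi : ∀ k : Fin p, (Ball.filter fun q => q.1.1 = k ∧ q.2.1 = k)
      = ((univ : Finset (Fin p × Fin a)).filter fun v => v.1 = k).offDiag := by
    intro k
    ext q
    simp only [hBall, mem_filter, Finset.mem_offDiag, mem_univ, true_and]
    tauto
  have hBicard : ∀ k : Fin p, (Ball.filter fun q => q.1.1 = k ∧ q.2.1 = k).card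
      = a * a - a := by
    intro k
    rw [hBi k, Finset.offDiag_card, Vi_card]
  have hS1card : S1.card = p * (a * a - a) := by
    have hfib : ∀ k : Fin p, S1.filter (fun q => q.1.1 = k)
        = Ball.filter fun q => q.1.1 = k ∧ q.2.1 = k := by
      intro k
      ext q
      simp only [hS1, filter_filter, mem_filter]
      constructor
      · rintro ⟨hq, hsame, hk⟩; exact ⟨hq, hk, hsame.symm.trans hk⟩
      · rintro ⟨hq, hk1, hk2⟩; exact ⟨hq, hk1.trans hk2.symm, hk1⟩
    rw [Finset.card_eq_sum_card_fiberwise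
      (f := fun q => q.1.1) (t := (univ : Finset (Fin p))) (fun q _ => mem_univ _)]
    calc ∑ k ∈ univ, (S1.filter fun q => q.1.1 = k).card
        = ∑ _k ∈ (univ : Finset (Fin p)), (a * a - a) :=
          Finset.sum_congr rfl (fun k _ => by rw [hfib k]; exact hBicard k)
      _ = p * (a * a - a) := by
          rw [Finset.sum_const, smul_eq_mul, card_univ, Fintype.card_fin]
  have hBallcard : S1.card + (Ball.filter fun q => ¬ q.1.1 = q.2.1).card
      = (p * a) * (p * a) - (p * a) := by
    rw [hS1, Finset.card_filter_add_card_filter_not, hBall, Finset.offDiag_card,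
      card_univ, Fintype.card_prod, Fintype.card_fin, Fintype.card_fin]
  -- pure pair counting for part i
  have hpurepairs := sum_multOf ends (Ball.filter fun q => q.1.1 = i ∧ q.2.1 = i)
    (fun q hq => hBallne q (mem_filter.mp hq).1)
    (by
      intro q hq
      obtain ⟨hq1, hq2, hq3⟩ := mem_filter.mp hq
      exact mem_filter.mpr ⟨hBallsymm q hq1, hq3, hq2⟩)
  have hpurefilter : (univ.filter fun e =>
      ends e ∈ Ball.filter fun q => q.1.1 = i ∧ q.2.1 = i) = Pi := by
    ext e
    simp only [hPi, mem_filter, mem_univ, true_and, hBall, Finset.mem_offDiag]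
    constructor
    · rintro ⟨_, h⟩; exact h
    · rintro ⟨h1, h2⟩; exact ⟨hloopless e, h1, h2⟩
  rw [hpurefilter] at hpurepairs
  have hpureval : ∑ q ∈ (Ball.filter fun q => q.1.1 = i ∧ q.2.1 = i), multOf ends q.1 q.2
      = (a * a - a) * l1 := by
    rw [Finset.sum_congr rfl (fun q hq => by
      obtain ⟨hq1, hk1, hk2⟩ := mem_filter.mp hq
      rw [hmult q.1 q.2 (hBallne q hq1), if_pos (hk1.trans hk2.symm)]),
      Finset.sum_const, smul_eq_mul, hBicard i]
  rw [hpureval] at hpurepairs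
  -- assemble
  rw [hallsum] at hall
  set d := D.card
  set s2 := (Ball.filter fun q => ¬ q.1.1 = q.2.1).card
  rw [hS1card] at hall hBallcard
  rw [← hNE] at hall
  obtain ⟨A, rfl⟩ : ∃ A, a = A + 2 := ⟨a - 2, by omega⟩
  obtain ⟨P, rfl⟩ : ∃ P, p = P + 2 := ⟨p - 2, by omega⟩
  clear_value d s2
  exact final_arith A P d Pi.card l1 l2 s2 hall hBallcard hpurepairs hPisum
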